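/- Let G be a group whose abelianization G_ab is finitely generated and whose derived subgroup G′ = [G,G] has a complement in G. Then the short exact sequence 1 → ∇(G) → G ⊗ G → G ∧ G → 1 splits on the left; consequently G ⊗ G ≅ ∇(G) × (G ∧ G), and hence J(G) ≅ M(G) × ∇(G), i.e. π₃(SK(G,1)) ≅ H₂(G) × ∇(G). -/

import Mathlib

/- Nonabelian tensor square framework (Brown–Loday). -/

namespace NATensor

variable (G : Type*) [Group G]

/-- The relator set for the nonabelian tensor square of `G`:
`g g' ⊗ h = (ᵍg' ⊗ ᵍh)(g ⊗ h)` and `g ⊗ h h' = (g ⊗ h)(ʰg ⊗ ʰh')`. -/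
def rels : Set (FreeGroup (G × G)) :=
  {r | (∃ g g' h : G,
          r = FreeGroup.of (g * g', h) *
              (FreeGroup.of (g * g' * g⁻¹, g * h * g⁻¹) * FreeGroup.of (g, h))⁻¹) ∨
       (∃ g h h' : G,
          r = FreeGroup.of (g, h * h') *
              (FreeGroup.of (g, h) * FreeGroup.of (h * g * h⁻¹, h * h' * h⁻¹))⁻¹)}

/-- The nonabelian tensor square `G ⊗ G`. -/
abbrev TS := PresentedGroup (rels G)

variable {G}

/-- The generator `g ⊗ h` of the nonabelian tensor square. -/
def tmul (g h : G) : TS G := PresentedGroup.of (g, h)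

lemma mk_rel_eq_one {r : FreeGroup (G × G)} (hr : r ∈ rels G) :
    (PresentedGroup.mk (rels G) r : TS G) = 1 :=
  (QuotientGroup.eq_one_iff r).mpr (Subgroup.subset_normalClosure hr)

lemma tmul_rel₁ (g g' h : G) :
    tmul (g * g') h = tmul (g * g' * g⁻¹) (g * h * g⁻¹) * tmul g h := by
  have h1 := mk_rel_eq_one (G := G) (Or.inl ⟨g, g', h, rfl⟩)
  simpa only [tmul, PresentedGroup.of, map_mul, map_inv, mul_inv_eq_one] using h1

lemma tmul_rel₂ (g h h' : G) :
    tmul g (h * h') = tmul g h * tmul (h * g * h⁻¹) (h * h' * h⁻¹) := by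
  have h1 := mk_rel_eq_one (G := G) (Or.inr ⟨g, h, h', rfl⟩)
  simpa only [tmul, PresentedGroup.of, map_mul, map_inv, mul_inv_eq_one] using h1

variable (G)

/-- The homomorphism `κ : G ⊗ G → G`, `g ⊗ h ↦ [g,h] = g h g⁻¹ h⁻¹` (its image is `[G,G]`). -/
def kappa : TS G →* G :=
  PresentedGroup.toGroup (f := fun x : G × G => x.1 * x.2 * x.1⁻¹ * x.2⁻¹) (by
    rintro r (⟨g, g', h, rfl⟩ | ⟨g, h, h', rfl⟩) <;>
      simp only [map_mul, map_inv, FreeGroup.lift_apply_of] <;> group)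

variable {G}

@[simp] lemma kappa_tmul (g h : G) : kappa G (tmul g h) = g * h * g⁻¹ * h⁻¹ :=
  PresentedGroup.toGroup.of _

variable (G)

/-- `J(G) = ker κ ≅ π₃(SK(G,1))`. -/
def J : Subgroup (TS G) := (kappa G).ker

/-- `∇(G)`: the (normal) subgroup of `G ⊗ G` generated by the elements `x ⊗ x`. -/
def nabla : Subgroup (TS G) :=
  Subgroup.normalClosure {t | ∃ x : G, t = tmul x x}

/-- `Δ(G)`: the (normal) subgroup of `G ⊗ G` generated by the `(x ⊗ y)(y ⊗ x)`. -/
def delta : Subgroup (TS G) :=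
  Subgroup.normalClosure {t | ∃ x y : G, t = tmul x y * tmul y x}

instance : (nabla G).Normal := Subgroup.normalClosure_normal

instance : (delta G).Normal := Subgroup.normalClosure_normal

/-- The exterior square `G ∧ G = (G ⊗ G)/∇(G)`. -/
abbrev ES := TS G ⧸ nabla G

/-- The symmetric square `G ⊗̃ G = (G ⊗ G)/Δ(G)`. -/
abbrev SS := TS G ⧸ delta G

variable {G}

/-- The element `g ∧ h` of the exterior square. -/
def emul (g h : G) : ES G := QuotientGroup.mk' (nabla G) (tmul g h)

/-- The image of `g ⊗ h` in the symmetric square. -/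
def smul (g h : G) : SS G := QuotientGroup.mk' (delta G) (tmul g h)

variable {H : Type*} [Group H]

/-- The induced homomorphism `G ⊗ G → H ⊗ H` of a homomorphism `f : G → H`. -/
def tmap (f : G →* H) : TS G →* TS H :=
  PresentedGroup.toGroup (f := fun x : G × G => tmul (f x.1) (f x.2)) (by
    rintro r (⟨g, g', h, rfl⟩ | ⟨g, h, h', rfl⟩) <;>
      simp only [map_mul, map_inv, FreeGroup.lift_apply_of, mul_inv_eq_one]
    · rw [tmul_rel₁]
    · rw [tmul_rel₂])

@[simp] lemma tmap_tmul (f : G →* H) (g h : G) :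
    tmap f (tmul g h) = tmul (f g) (f h) :=
  PresentedGroup.toGroup.of _

lemma nabla_le_comap_nabla (f : G →* H) :
    nabla G ≤ MonoidHom.ker ((QuotientGroup.mk' (nabla H)).comp (tmap f)) := by
  refine Subgroup.normalClosure_le_normal ?_
  rintro _ ⟨y, rfl⟩
  simp only [SetLike.mem_coe, MonoidHom.mem_ker, MonoidHom.comp_apply, tmap_tmul,
    QuotientGroup.mk'_apply, QuotientGroup.eq_one_iff]
  exact Subgroup.subset_normalClosure ⟨f y, rfl⟩

lemma delta_le_comap_delta (f : G →* H) :
    delta G ≤ MonoidHom.ker ((QuotientGroup.mk' (delta H)).comp (tmap f)) := by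
  refine Subgroup.normalClosure_le_normal ?_
  rintro _ ⟨x, y, rfl⟩
  simp only [SetLike.mem_coe, MonoidHom.mem_ker, MonoidHom.comp_apply, map_mul, tmap_tmul,
    QuotientGroup.mk'_apply, ← QuotientGroup.mk_mul, QuotientGroup.eq_one_iff]
  exact Subgroup.subset_normalClosure ⟨f x, f y, rfl⟩

/-- The induced homomorphism `G ∧ G → H ∧ H` of a homomorphism `f : G → H`. -/
def emap (f : G →* H) : ES G →* ES H :=
  QuotientGroup.lift (nabla G) ((QuotientGroup.mk' (nabla H)).comp (tmap f))
    (fun x hx => MonoidHom.mem_ker.mp (nabla_le_comap_nabla f hx))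

@[simp] lemma emap_emul (f : G →* H) (g h : G) :
    emap f (emul g h) = emul (f g) (f h) := by
  simp [emap, emul, QuotientGroup.mk'_apply, QuotientGroup.lift_mk']
  rfl

/-- The induced homomorphism `G ⊗̃ G → H ⊗̃ H` of a homomorphism `f : G → H`. -/
def smap (f : G →* H) : SS G →* SS H :=
  QuotientGroup.lift (delta G) ((QuotientGroup.mk' (delta H)).comp (tmap f))
    (fun x hx => MonoidHom.mem_ker.mp (delta_le_comap_delta f hx))

variable (G)

lemma nabla_le_ker_kappa : nabla G ≤ (kappa G).ker := by
  refine Subgroup.normalClosure_le_normal ?_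
  rintro _ ⟨x, rfl⟩
  simp only [SetLike.mem_coe, MonoidHom.mem_ker, kappa_tmul]
  group

/-- The homomorphism `κ' : G ∧ G → G`, `g ∧ h ↦ [g,h]` (its image is `[G,G]`). -/
def kappa' : ES G →* G :=
  QuotientGroup.lift (nabla G) (kappa G)
    (fun x hx => MonoidHom.mem_ker.mp (nabla_le_ker_kappa G hx))

/-- The Schur multiplier `M(G) = ker κ' ≅ H₂(G)`. -/
def M : Subgroup (ES G) := (kappa' G).ker

/-- `J̃(G) = J(G)/Δ(G) ≅ π₂ˢ(K(G,1))`, realized as the image of `J(G)` in `G ⊗̃ G`. -/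
def Jt : Subgroup (SS G) := Subgroup.map (QuotientGroup.mk' (delta G)) (J G)

/-- `∇(G)/Δ(G)`, realized as the image of `∇(G)` in `G ⊗̃ G`. -/
def nablaBar : Subgroup (SS G) := Subgroup.map (QuotientGroup.mk' (delta G)) (nabla G)


set_option linter.dupNamespace false
set_option linter.unusedVariables false

section Dev
variable {G : Type*} [Group G]

lemma tmul_one_left' (h : G) : tmul (1 : G) h = (1 : TS G) := by
  have h1 : tmul (1 : G) h = tmul (1 : G) h * tmul 1 h := by
    simpa using tmul_rel₁ (1 : G) 1 h
  exact (left_eq_mul.mp h1)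

lemma tmul_one_right' (g : G) : tmul g (1 : G) = (1 : TS G) := by
  have h1 : tmul g (1 : G) = tmul g 1 * tmul g 1 := by
    simpa using tmul_rel₂ g 1 1
  exact (left_eq_mul.mp h1)

/-- The conjugation action of `G` on `G ⊗ G`. -/
def act (g : G) : TS G →* TS G := tmap (MulAut.conj g).toMonoidHom

@[simp] lemma act_tmul (g x y : G) :
    act g (tmul x y) = tmul (g * x * g⁻¹) (g * y * g⁻¹) := by
  simp [act, tmap_tmul]

lemma act_act (g h : G) (t : TS G) : act g (act h t) = act (g * h) t := by
  have hc : (act g).comp (act h) = (act (g * h) : TS G →* TS G) :=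
    PresentedGroup.ext fun x => by
      show act g (act h (tmul x.1 x.2)) = act (g * h) (tmul x.1 x.2)
      simp only [act_tmul]
      congr 1 <;> group
  calc act g (act h t) = ((act g).comp (act h)) t := rfl
    _ = act (g * h) t := by rw [hc]

lemma act_one (t : TS G) : act (1 : G) t = t := by
  have hc : (act (1 : G) : TS G →* TS G) = MonoidHom.id _ :=
    PresentedGroup.ext fun x => by
      show act (1:G) (tmul x.1 x.2) = tmul x.1 x.2
      simp
  rw [hc]; rfl

lemma tmul_mul_left (g x h : G) :
    tmul (g * x) h = act g (tmul x h) * tmul g h := by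
  rw [act_tmul]; exact tmul_rel₁ g x h

lemma tmul_mul_right (g h k : G) :
    tmul g (h * k) = tmul g h * act h (tmul g k) := by
  rw [act_tmul]; exact tmul_rel₂ g h k

lemma act_inv_left (g h : G) : act g⁻¹ (tmul g h) = (tmul g⁻¹ h)⁻¹ := by
  have h1 := tmul_mul_left g⁻¹ g h
  simp only [inv_mul_cancel, tmul_one_left'] at h1
  exact eq_inv_of_mul_eq_one_left h1.symm

lemma act_inv_right (g h : G) : act h⁻¹ (tmul g h) = (tmul g h⁻¹)⁻¹ := by
  have h1 := tmul_mul_right g h⁻¹ h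
  simp only [inv_mul_cancel, tmul_one_right'] at h1
  exact (eq_inv_of_mul_eq_one_right h1.symm)

/-- Key exchange identity, generator case. -/
lemma key_gen (g h x y : G) :
    act g (act h (tmul x y)) * tmul g h = tmul g h * act h (act g (tmul x y)) := by
  have W1 : tmul (g * x) (h * y)
      = act g (tmul x h) * (act g (act h (tmul x y)) * (tmul g h * act h (tmul g y))) := by
    rw [tmul_mul_left g x (h*y), tmul_mul_right x h y, tmul_mul_right g h y, map_mul]
    simp only [mul_assoc]
  have W2 : tmul (g * x) (h * y)
      = act g (tmul x h) * (tmul g h * (act h (act g (tmul x y)) * act h (tmul g y))) := by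
    rw [tmul_mul_right (g*x) h y, tmul_mul_left g x h, tmul_mul_left g x y, map_mul]
    simp only [mul_assoc]
  have h2 := mul_left_cancel (W1.symm.trans W2)
  rw [← mul_assoc, ← mul_assoc] at h2
  exact mul_right_cancel h2

/-- Key exchange identity. -/
lemma key (g h : G) (s : TS G) :
    act g (act h s) * tmul g h = tmul g h * act h (act g s) := by
  have hc : MonoidHom.comp (MulAut.conj (tmul g h)).toMonoidHom
      ((act h).comp (act g)) = (act g).comp (act h) := by
    refine PresentedGroup.ext fun x => ?_
    show (MulAut.conj (tmul g h)) (act h (act g (tmul x.1 x.2)))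
        = act g (act h (tmul x.1 x.2))
    rw [MulAut.conj_apply, ← key_gen g h x.1 x.2]
    group
  have h3 := DFunLike.congr_fun hc s
  simp only [MonoidHom.comp_apply, MulEquiv.coe_toMonoidHom, MulAut.conj_apply] at h3
  rw [← h3]
  group

lemma closure_range_tmul :
    Subgroup.closure (Set.range fun p : G × G => tmul p.1 p.2) = (⊤ : Subgroup (TS G)) := by
  rw [Subgroup.eq_top_iff']
  intro t
  have hmem : ∀ x : G × G, (PresentedGroup.of x : TS G)
      ∈ Set.range fun p : G × G => tmul p.1 p.2 := fun x => ⟨x, rfl⟩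
  refine QuotientGroup.induction_on t fun f => ?_
  induction f using FreeGroup.induction_on with
  | C1 => exact (Subgroup.closure _).one_mem
  | of x => exact Subgroup.subset_closure (hmem x)
  | inv_of x _ => exact (Subgroup.closure _).inv_mem (Subgroup.subset_closure (hmem x))
  | mul x y hx hy => exact (Subgroup.closure _).mul_mem hx hy

/-- Peiffer/crossed-module identity. -/
lemma conj_eq_act (t s : TS G) : t * s * t⁻¹ = act (kappa G t) s := by
  have htop : t ∈ Subgroup.closure (Set.range fun p : G × G => tmul p.1 p.2) := by
    rw [closure_range_tmul]; trivial
  induction htop using Subgroup.closure_induction generalizing s with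
  | mem x hx =>
      obtain ⟨⟨a, b⟩, rfl⟩ := hx
      show tmul a b * s * (tmul a b)⁻¹ = act (kappa G (tmul a b)) s
      have h1 := key a b (act a⁻¹ (act b⁻¹ s))
      rw [act_act a b, act_act b a, act_act a⁻¹ b⁻¹, act_act (a*b) (a⁻¹*b⁻¹),
          act_act (b*a) (a⁻¹*b⁻¹), show b*a*(a⁻¹*b⁻¹) = 1 by group, act_one] at h1
      rw [kappa_tmul, show a*b*a⁻¹*b⁻¹ = a*b*(a⁻¹*b⁻¹) by group]
      conv_lhs => rw [show tmul a b * s = act (a*b*(a⁻¹*b⁻¹)) s * tmul a b from h1.symm ▸ rfl]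
      group
  | one => simp [map_one, act_one]
  | mul x y hx hy ihx ihy =>
      have : x * y * s * (x * y)⁻¹ = x * (y * s * y⁻¹) * x⁻¹ := by group
      rw [this, ihy, ihx, map_mul, act_act]
  | inv x hx ih =>
      have h1 := ih (act ((kappa G x))⁻¹ s)
      rw [act_act, mul_inv_cancel, act_one] at h1
      rw [map_inv, inv_inv]
      conv_lhs => rw [← h1]
      group

end Dev

section Dev2
variable {G : Type*} [Group G]

lemma central_of_kappa_eq_one {t : TS G} (ht : kappa G t = 1) (s : TS G) :
    t * s = s * t := by
  have h := conj_eq_act t s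
  rw [ht, act_one] at h
  calc t * s = t * s * t⁻¹ * t := by group
    _ = s * t := by rw [h]

lemma tmul_diag_comm (w : G) (s : TS G) : tmul w w * s = s * tmul w w :=
  central_of_kappa_eq_one (by rw [kappa_tmul]; group) s

lemma tmul_commute_comm {u v : G} (huv : u * v = v * u) (s : TS G) :
    tmul u v * s = s * tmul u v :=
  central_of_kappa_eq_one (by rw [kappa_tmul, huv]; group) s

lemma conj_central {t : TS G} (hcen : ∀ s : TS G, t * s = s * t) (u : TS G) :
    u * t * u⁻¹ = t := by
  calc u * t * u⁻¹ = u * (t * u⁻¹) := by group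
    _ = u * (u⁻¹ * t) := by rw [hcen u⁻¹]
    _ = t := by group

lemma act_comm_apply (a b : G) (X : TS G) :
    act (a * b * a⁻¹ * b⁻¹) X = tmul a b * X * (tmul a b)⁻¹ := by
  rw [← kappa_tmul a b]
  exact (conj_eq_act (tmul a b) X).symm

lemma key_conj (g b : G) (s : TS G) :
    (tmul g b)⁻¹ * act g (act b s) * tmul g b = act b (act g s) := by
  have h := key g b s
  calc (tmul g b)⁻¹ * act g (act b s) * tmul g b
      = (tmul g b)⁻¹ * (act g (act b s) * tmul g b) := by group
    _ = (tmul g b)⁻¹ * (tmul g b * act b (act g s)) := by rw [h]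
    _ = act b (act g s) := by group

/-- `g ⊗ βwβ⁻¹ = (gβ ⊗ w)(β ⊗ w)⁻¹`. -/
lemma tmul_conj_second (g β w : G) :
    tmul g (β * w * β⁻¹) = tmul (g * β) w * (tmul β w)⁻¹ := by
  have h := tmul_mul_left β (β⁻¹ * g * β) w
  rw [act_tmul] at h
  rw [show β * (β⁻¹ * g * β) = g * β by group] at h
  rw [show g * β * β⁻¹ = g by group] at h
  rw [h]
  group

/-- Identity (G8): `(gb ⊗ w)·ʷ(g ⊗ b) = (g ⊗ b)·(bg ⊗ w)`. -/
lemma G8 (g b w : G) :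
    tmul (g * b) w * act w (tmul g b) = tmul g b * tmul (b * g) w := by
  have p5 : act w (tmul g b) = (tmul g w)⁻¹ * tmul g (w * b) := by
    rw [tmul_mul_right g w b]; group
  have hacts : act g (tmul b w) = act g (act b ((tmul b⁻¹ w)⁻¹)) := by
    rw [← act_inv_left b w, act_act b b⁻¹ (tmul b w), mul_inv_cancel, act_one]
  have p6 : (tmul g b)⁻¹ * tmul g (w * b) = act b (tmul g (b⁻¹ * w * b)) := by
    have h := tmul_mul_right g b (b⁻¹ * w * b)
    rw [show b * (b⁻¹ * w * b) = w * b by group] at h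
    rw [h]; group
  have hAg : act g ((tmul b⁻¹ w)⁻¹) = tmul g w * (tmul (g * b⁻¹) w)⁻¹ := by
    rw [map_inv, show act g (tmul b⁻¹ w) = tmul (g * b⁻¹) w * (tmul g w)⁻¹ from by
      rw [tmul_mul_left g b⁻¹ w]; group]
    group
  have hconj : tmul g (b⁻¹ * w * b) = tmul (g * b⁻¹) w * (tmul b⁻¹ w)⁻¹ := by
    have h := tmul_conj_second g b⁻¹ w
    rwa [inv_inv] at h
  have hbinv : act b ((tmul b⁻¹ w)⁻¹) = tmul b w := by
    have h := act_inv_left b⁻¹ w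
    rw [inv_inv] at h
    rw [map_inv, h, inv_inv]
  have hA : (tmul g b)⁻¹ * (tmul (g * b) w * act w (tmul g b)) = tmul (b * g) w := by
    calc (tmul g b)⁻¹ * (tmul (g * b) w * act w (tmul g b))
        = (tmul g b)⁻¹ * (act g (tmul b w) * tmul g w *
            ((tmul g w)⁻¹ * tmul g (w * b))) := by rw [p5, tmul_mul_left g b w]
      _ = (tmul g b)⁻¹ * act g (act b ((tmul b⁻¹ w)⁻¹)) * tmul g b *
            ((tmul g b)⁻¹ * tmul g (w * b)) := by rw [hacts]; group
      _ = act b (act g ((tmul b⁻¹ w)⁻¹)) * act b (tmul g (b⁻¹ * w * b)) := by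
            rw [key_conj g b, p6]
      _ = act b (act g ((tmul b⁻¹ w)⁻¹) * tmul g (b⁻¹ * w * b)) := by rw [map_mul]
      _ = act b (tmul g w * (tmul b⁻¹ w)⁻¹) := by
            rw [hAg, hconj]
            congr 1
            group
      _ = act b (tmul g w) * tmul b w := by rw [map_mul, hbinv]
      _ = tmul (b * g) w := (tmul_mul_left b g w).symm
  calc tmul (g * b) w * act w (tmul g b)
      = tmul g b * ((tmul g b)⁻¹ * (tmul (g * b) w * act w (tmul g b))) := by group
    _ = tmul g b * tmul (b * g) w := by rw [hA]

/-- Identity (G5): `ᵍ(b ⊗ w)·(g ⊗ wb) = (g ⊗ bw)·(b ⊗ w)`. -/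
lemma G5 (g b w : G) :
    act g (tmul b w) * tmul g (w * b) = tmul g (b * w) * tmul b w := by
  rw [tmul_mul_right g w b, tmul_mul_right g b w, ← mul_assoc, ← tmul_mul_left g b w,
    G8 g b w, tmul_mul_left b g w]
  group

/-- Identity (C): `[a,b] ⊗ w = (a ⊗ b)·ʷ(a ⊗ b)⁻¹`. -/
lemma tmul_commutator_left (a b w : G) :
    tmul (a * b * a⁻¹ * b⁻¹) w = tmul a b * (act w (tmul a b))⁻¹ := by
  have e1 := tmul_mul_left a b w
  have e2 : tmul (a * b) w
      = act (a * b * a⁻¹ * b⁻¹) (act b (tmul a w) * tmul b w)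
        * tmul (a * b * a⁻¹ * b⁻¹) w := by
    have h := tmul_mul_left (a * b * a⁻¹ * b⁻¹) (b * a) w
    rw [show a * b * a⁻¹ * b⁻¹ * (b * a) = a * b by group] at h
    rw [h, tmul_mul_left b a w]
  have e3 : tmul a b * (act b (tmul a w) * tmul b w) * (tmul a b)⁻¹
        * tmul (a * b * a⁻¹ * b⁻¹) w = act a (tmul b w) * tmul a w := by
    rw [← act_comm_apply]
    exact e2.symm.trans e1
  have claim : act w (tmul a b)
      = (tmul a w)⁻¹ * ((act a (tmul b w))⁻¹
          * (tmul a b * (act b (tmul a w) * tmul b w))) := by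
    calc act w (tmul a b) = (tmul a w)⁻¹ * tmul a (w * b) := by
          rw [tmul_mul_right a w b]; group
      _ = (tmul a w)⁻¹ * ((act a (tmul b w))⁻¹ * (tmul a (b * w) * tmul b w)) := by
          rw [← G5 a b w]; group
      _ = (tmul a w)⁻¹ * ((act a (tmul b w))⁻¹
            * (tmul a b * (act b (tmul a w) * tmul b w))) := by
          rw [tmul_mul_right a b w]; group
  calc tmul (a * b * a⁻¹ * b⁻¹) w
      = (tmul a b * (act b (tmul a w) * tmul b w) * (tmul a b)⁻¹)⁻¹
        * (act a (tmul b w) * tmul a w) := by rw [← e3]; group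
    _ = tmul a b * (act w (tmul a b))⁻¹ := by rw [claim]; group

/-- Identity (B): `w ⊗ [a,b] = ʷ(a ⊗ b)·(a ⊗ b)⁻¹`. -/
lemma tmul_commutator_right (a b w : G) :
    tmul w (a * b * a⁻¹ * b⁻¹) = act w (tmul a b) * (tmul a b)⁻¹ := by
  have e1 := tmul_mul_right w a b
  have e2 : tmul w (a * b)
      = tmul w (a * b * a⁻¹ * b⁻¹)
        * act (a * b * a⁻¹ * b⁻¹) (tmul w b * act b (tmul w a)) := by
    have h := tmul_mul_right w (a * b * a⁻¹ * b⁻¹) (b * a)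
    rw [show a * b * a⁻¹ * b⁻¹ * (b * a) = a * b by group] at h
    rw [h, tmul_mul_right w b a]
  have e3 : tmul w (a * b * a⁻¹ * b⁻¹)
        * (tmul a b * (tmul w b * act b (tmul w a)) * (tmul a b)⁻¹)
      = tmul w a * act a (tmul w b) := by
    rw [← act_comm_apply]
    exact e2.symm.trans e1
  have claim : tmul w a * act a (tmul w b) * tmul a b * (act b (tmul w a))⁻¹
      * (tmul w b)⁻¹ = act w (tmul a b) := by
    calc tmul w a * act a (tmul w b) * tmul a b * (act b (tmul w a))⁻¹ * (tmul w b)⁻¹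
        = tmul w a * (act a (tmul w b) * tmul a b) * (act b (tmul w a))⁻¹
            * (tmul w b)⁻¹ := by group
      _ = tmul w a * tmul (a * w) b * (act b (tmul w a))⁻¹ * (tmul w b)⁻¹ := by
          rw [← tmul_mul_left a w b]
      _ = tmul (w * a) b * (tmul w b)⁻¹ := by rw [← G8 w a b]; group
      _ = act w (tmul a b) := by rw [tmul_mul_left w a b]; group
  calc tmul w (a * b * a⁻¹ * b⁻¹)
      = (tmul w a * act a (tmul w b))
        * (tmul a b * (tmul w b * act b (tmul w a)) * (tmul a b)⁻¹)⁻¹ := by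
        rw [← e3]; group
    _ = act w (tmul a b) * (tmul a b)⁻¹ := by rw [← claim]; group

lemma tmul_commutator_self (a b : G) :
    tmul (a * b * a⁻¹ * b⁻¹) (a * b * a⁻¹ * b⁻¹) = 1 := by
  have h := tmul_commutator_left a b (a * b * a⁻¹ * b⁻¹)
  have h2 : act (a * b * a⁻¹ * b⁻¹) (tmul a b) = tmul a b := by
    rw [act_comm_apply]; group
  rw [h, h2]
  group

lemma diag_commutator (a b w : G) :
    tmul (a * b * a⁻¹ * b⁻¹ * w) (a * b * a⁻¹ * b⁻¹ * w) = tmul w w := by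
  have s1 := tmul_mul_left (a * b * a⁻¹ * b⁻¹) w (a * b * a⁻¹ * b⁻¹ * w)
  have s2 := tmul_mul_right w (a * b * a⁻¹ * b⁻¹) w
  have s3 := tmul_mul_right (a * b * a⁻¹ * b⁻¹) (a * b * a⁻¹ * b⁻¹) w
  rw [s1, s2, s3, tmul_commutator_self a b, one_mul, map_mul]
  simp only [act_comm_apply]
  rw [tmul_commutator_right a b w, tmul_commutator_left a b w]
  calc tmul a b * (act w (tmul a b) * (tmul a b)⁻¹) * (tmul a b)⁻¹
        * (tmul a b * (tmul a b * tmul w w * (tmul a b)⁻¹) * (tmul a b)⁻¹)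
        * (tmul a b * (tmul a b * (act w (tmul a b))⁻¹) * (tmul a b)⁻¹)
      = tmul a b * (act w (tmul a b) * tmul w w * (act w (tmul a b))⁻¹)
        * (tmul a b)⁻¹ := by group
    _ = tmul w w := by
        rw [conj_central (tmul_diag_comm w) (act w (tmul a b)),
          conj_central (tmul_diag_comm w) (tmul a b)]

/-- The set of `c` with `(c w) ⊗ (c w) = w ⊗ w` for all `w` is a subgroup. -/
def ccSub (G : Type*) [Group G] : Subgroup G where
  carrier := {c | ∀ w, tmul (c * w) (c * w) = tmul w w}
  one_mem' := by intro w; simp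
  mul_mem' := by
    intro c d hc hd w
    have h1 := hc (d * w)
    rw [← mul_assoc] at h1
    rw [h1, hd w]
  inv_mem' := by
    intro c hc w
    have h1 := hc (c⁻¹ * w)
    rw [show c * (c⁻¹ * w) = w by group] at h1
    exact h1.symm

lemma commutator_le_ccSub : commutator G ≤ ccSub G := by
  rw [commutator_def]
  rw [Subgroup.commutator_le]
  intro g₁ _ g₂ _
  intro w
  rw [commutatorElement_def]
  exact diag_commutator g₁ g₂ w

lemma diag_eq_of_mem_commutator {c : G} (hc : c ∈ commutator G) (w : G) :
    tmul (c * w) (c * w) = tmul w w :=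
  commutator_le_ccSub hc w

end Dev2

section Dev3
variable {G : Type*} [Group G]

lemma tmul_diag_mem_center (x : G) : tmul x x ∈ Subgroup.center (TS G) :=
  Subgroup.mem_center_iff.mpr fun s => (tmul_diag_comm x s).symm

lemma nabla_eq_closure' :
    nabla G = Subgroup.closure {t : TS G | ∃ x : G, t = tmul x x} := by
  have hle : Subgroup.closure {t : TS G | ∃ x : G, t = tmul x x}
      ≤ Subgroup.center (TS G) := by
    rw [Subgroup.closure_le]
    rintro t ⟨x, rfl⟩
    exact tmul_diag_mem_center x
  have hnorm : (Subgroup.closure {t : TS G | ∃ x : G, t = tmul x x}).Normal := by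
    constructor
    intro n hn g
    have hcen : ∀ s : TS G, n * s = s * n := fun s =>
      ((Subgroup.mem_center_iff.mp (hle hn)) s).symm
    rw [conj_central hcen g]
    exact hn
  apply le_antisymm
  · exact Subgroup.normalClosure_le_normal Subgroup.subset_closure
  · rw [Subgroup.closure_le]
    exact Subgroup.subset_normalClosure

lemma tmul_diag_mem_nabla (x : G) : tmul x x ∈ nabla G :=
  Subgroup.subset_normalClosure ⟨x, rfl⟩

lemma tmul_zpow_right (u : G) (n : ℤ) : tmul u (u ^ n) = (tmul u u) ^ n := by
  induction n using Int.induction_on with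
  | zero => simp [tmul_one_right']
  | succ n ih =>
      have h := tmul_mul_right u (u ^ (n : ℤ)) u
      rw [act_tmul, show u ^ (n : ℤ) * u * (u ^ (n : ℤ))⁻¹ = u by group] at h
      rw [zpow_add_one, h, ih, zpow_add_one]
  | pred n ih =>
      have h := tmul_mul_right u (u ^ (-(n : ℤ) - 1)) u
      rw [act_tmul, show u ^ (-(n : ℤ) - 1) * u * (u ^ (-(n : ℤ) - 1))⁻¹ = u by group] at h
      rw [show u ^ (-(n : ℤ) - 1) * u = u ^ (-(n : ℤ)) by group] at h
      rw [ih] at h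
      rw [show tmul u (u ^ (-(n : ℤ) - 1)) = (tmul u u) ^ (-(n : ℤ)) * (tmul u u)⁻¹ from by
        rw [h]; group]
      group

lemma tmul_zpow_left (u : G) (n m : ℤ) :
    tmul (u ^ m) (u ^ n) = (tmul u (u ^ n)) ^ m := by
  induction m using Int.induction_on with
  | zero => simp [tmul_one_left']
  | succ m ih =>
      have h := tmul_mul_left (u ^ (m : ℤ)) u (u ^ n)
      rw [act_tmul, show u ^ (m : ℤ) * u * (u ^ (m : ℤ))⁻¹ = u by group,
        show u ^ (m : ℤ) * (u ^ n) * (u ^ (m : ℤ))⁻¹ = u ^ n by group] at h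
      rw [zpow_add_one, h, ih]
      group
  | pred m ih =>
      have h := tmul_mul_left (u ^ (-(m : ℤ) - 1)) u (u ^ n)
      rw [act_tmul, show u ^ (-(m : ℤ) - 1) * u * (u ^ (-(m : ℤ) - 1))⁻¹ = u by group,
        show u ^ (-(m : ℤ) - 1) * (u ^ n) * (u ^ (-(m : ℤ) - 1))⁻¹ = u ^ n by group,
        show u ^ (-(m : ℤ) - 1) * u = u ^ (-(m : ℤ)) by group, ih] at h
      rw [show tmul (u ^ (-(m : ℤ) - 1)) (u ^ n)
          = (tmul u (u ^ n))⁻¹ * (tmul u (u ^ n)) ^ (-(m : ℤ)) from by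
        rw [h]; group]
      group

lemma tmul_zpow (u : G) (m n : ℤ) : tmul (u ^ m) (u ^ n) = (tmul u u) ^ (m * n) := by
  rw [tmul_zpow_left, tmul_zpow_right, ← zpow_mul, mul_comm n m]

lemma tmul_zpow_mem_nabla (u : G) (m n : ℤ) : tmul (u ^ m) (u ^ n) ∈ nabla G := by
  rw [tmul_zpow]
  exact Subgroup.zpow_mem _ (tmul_diag_mem_nabla u) _

lemma tmul_pair_mem_nabla {u v : G} (huv : u * v = v * u) :
    tmul u v * tmul v u ∈ nabla G := by
  have e1 : u * v * u⁻¹ = v := by rw [huv]; group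
  have e3 : u * u * u⁻¹ = u := by group
  have E : tmul (u * v) (u * v) = tmul v u * (tmul v v * (tmul u u * tmul u v)) := by
    rw [tmul_mul_left u v (u * v), tmul_mul_right v u v, tmul_mul_right u u v, map_mul]
    simp only [act_tmul]
    simp only [e1, e3]
    group
  have m1 : tmul u v ∈ Subgroup.center (TS G) :=
    Subgroup.mem_center_iff.mpr fun s => (tmul_commute_comm huv s).symm
  have m2 : tmul v u ∈ Subgroup.center (TS G) :=
    Subgroup.mem_center_iff.mpr fun s => (tmul_commute_comm huv.symm s).symm
  have E' : (⟨tmul (u*v) (u*v), tmul_diag_mem_center (u*v)⟩ : Subgroup.center (TS G))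
      = ⟨tmul v u, m2⟩ * (⟨tmul v v, tmul_diag_mem_center v⟩ *
        (⟨tmul u u, tmul_diag_mem_center u⟩ * ⟨tmul u v, m1⟩)) := Subtype.ext E
  have h2 : (⟨tmul u v, m1⟩ : Subgroup.center (TS G)) * ⟨tmul v u, m2⟩
      = (⟨tmul v v, tmul_diag_mem_center v⟩ : Subgroup.center (TS G))⁻¹ *
        ((⟨tmul u u, tmul_diag_mem_center u⟩ : Subgroup.center (TS G))⁻¹ *
          ⟨tmul (u*v) (u*v), tmul_diag_mem_center (u*v)⟩) := by
    rw [E']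
    have hac : (⟨tmul v u, m2⟩ : Subgroup.center (TS G)) *
        (⟨tmul v v, tmul_diag_mem_center v⟩ *
          (⟨tmul u u, tmul_diag_mem_center u⟩ * ⟨tmul u v, m1⟩))
        = ⟨tmul u u, tmul_diag_mem_center u⟩ * (⟨tmul v v, tmul_diag_mem_center v⟩ *
            (⟨tmul u v, m1⟩ * ⟨tmul v u, m2⟩)) := by
      ac_rfl
    rw [hac, inv_mul_cancel_left, inv_mul_cancel_left]
  have h3 : tmul u v * tmul v u
      = (tmul v v)⁻¹ * ((tmul u u)⁻¹ * tmul (u*v) (u*v)) := Subtype.ext_iff.mp h2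
  rw [h3]
  exact mul_mem (inv_mem (tmul_diag_mem_nabla v))
    (mul_mem (inv_mem (tmul_diag_mem_nabla u)) (tmul_diag_mem_nabla (u*v)))

end Dev3

section Dev4

open Finset

/-- A finitely generated commutative group admits a finite family of multiplicative
projections onto cyclic subgroups summing to the identity. -/
lemma exists_projections (A : Type*) [CommGroup A] [Group.FG A] :
    ∃ (N : ℕ) (pr : Fin N → A → A) (gen : Fin N → A),
      (∀ k a b, pr k (a * b) = pr k a * pr k b) ∧
      (∀ a, ∏ k, pr k a = a) ∧
      (∀ k a, ∃ m : ℤ, pr k a = gen k ^ m) := by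
  classical
  obtain ⟨n, ι, hι, p, hp, ee, ⟨E⟩⟩ :=
    AddCommGroup.equiv_free_prod_directSum_zmod (Additive A)
  haveI := hι
  haveI : ∀ i : ι, NeZero (p i ^ ee i) := fun i =>
    ⟨pow_ne_zero _ (hp i).ne_zero⟩
  set D := fun j : ι => ZMod (p j ^ ee j) with hD
  -- additive projections
  let P : Fin n ⊕ ι → Additive A → Additive A := fun k x =>
    Sum.elim
      (fun i => E.symm (Finsupp.single i ((E x).1 i), 0))
      (fun i => E.symm (0, DirectSum.of D i ((E x).2 i))) k
  let gen0 : Fin n ⊕ ι → Additive A := fun k =>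
    Sum.elim (fun i => E.symm (Finsupp.single i (1 : ℤ), 0))
      (fun i => E.symm (0, DirectSum.of D i 1)) k
  have Padd : ∀ k x y, P k (x + y) = P k x + P k y := by
    rintro (i | i) x y
    · show E.symm (Finsupp.single i ((E (x + y)).1 i), 0)
        = E.symm (Finsupp.single i ((E x).1 i), 0) + E.symm (Finsupp.single i ((E y).1 i), 0)
      rw [← map_add E.symm]
      congr 1
      rw [map_add E]
      simp [Prod.fst_add, Finsupp.add_apply, Finsupp.single_add, Prod.mk_add_mk]
    · show E.symm (0, DirectSum.of D i ((E (x + y)).2 i))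
        = E.symm (0, DirectSum.of D i ((E x).2 i)) + E.symm (0, DirectSum.of D i ((E y).2 i))
      rw [← map_add E.symm]
      congr 1
      rw [map_add E]
      simp [Prod.snd_add, DirectSum.add_apply, map_add, Prod.mk_add_mk]
  have Psum : ∀ x, ∑ k, P k x = x := by
    intro x
    rw [Fintype.sum_sum_type]
    have hL : (∑ i : Fin n, P (Sum.inl i) x) = E.symm ((E x).1, 0) := by
      show (∑ i : Fin n, E.symm (Finsupp.single i ((E x).1 i), 0)) = _
      rw [← map_sum E.symm]
      congr 1
      rw [Prod.ext_iff]
      constructor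
      · rw [Prod.fst_sum]
        simpa using Finsupp.univ_sum_single ((E x).1)
      · rw [Prod.snd_sum]
        simp
    have hT : (∑ i : ι, P (Sum.inr i) x) = E.symm (0, (E x).2) := by
      show (∑ i : ι, E.symm (0, DirectSum.of D i ((E x).2 i))) = _
      rw [← map_sum E.symm]
      congr 1
      rw [Prod.ext_iff]
      constructor
      · rw [Prod.fst_sum]; simp
      · rw [Prod.snd_sum]
        exact DirectSum.sum_univ_of ((E x).2)
    rw [hL, hT, ← map_add E.symm, Prod.mk_add_mk, add_zero, zero_add]
    exact E.symm_apply_apply x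
  have Pcyc : ∀ k x, ∃ m : ℤ, P k x = m • gen0 k := by
    rintro (i | i) x
    · refine ⟨(E x).1 i, ?_⟩
      show E.symm (Finsupp.single i ((E x).1 i), 0)
        = ((E x).1 i) • (E.symm (Finsupp.single i (1 : ℤ), 0))
      rw [← map_zsmul E.symm, Prod.smul_mk, smul_zero, Finsupp.smul_single,
        smul_eq_mul, mul_one]
    · refine ⟨(((E x).2 i).val : ℤ), ?_⟩
      show E.symm (0, DirectSum.of D i ((E x).2 i))
        = ((((E x).2 i).val : ℤ)) • (E.symm (0, DirectSum.of D i 1))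
      rw [← map_zsmul E.symm, Prod.smul_mk, smul_zero, ← map_zsmul (DirectSum.of D i)]
      congr 2
      rw [zsmul_eq_mul, mul_one, Int.cast_natCast]
      exact congrArg (⇑(DirectSum.of D i)) (ZMod.natCast_rightInverse ((E x).2 i)).symm
  -- reindex and pass to the multiplicative group
  let eqv := Fintype.equivFin (Fin n ⊕ ι)
  refine ⟨Fintype.card (Fin n ⊕ ι),
    fun k a => Additive.toMul (P (eqv.symm k) (Additive.ofMul a)),
    fun k => Additive.toMul (gen0 (eqv.symm k)), ?_, ?_, ?_⟩
  · intro k a b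
    show Additive.toMul (P (eqv.symm k) (Additive.ofMul (a * b))) = _
    rw [show Additive.ofMul (a * b) = Additive.ofMul a + Additive.ofMul b from rfl,
      Padd]
    rfl
  · intro a
    rw [← Equiv.prod_comp eqv (fun k => Additive.toMul (P (eqv.symm k) (Additive.ofMul a)))]
    simp only [Equiv.symm_apply_apply]
    rw [← toMul_sum, Psum]
    rfl
  · intro k a
    obtain ⟨m, hm⟩ := Pcyc (eqv.symm k) (Additive.ofMul a)
    refine ⟨m, ?_⟩
    show Additive.toMul (P (eqv.symm k) (Additive.ofMul a))
      = Additive.toMul (gen0 (eqv.symm k)) ^ m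
    rw [hm, toMul_zsmul]

end Dev4

section Dev5
open scoped Pointwise
open scoped IsMulCommutative
variable {G : Type*} [Group G]

lemma exists_section (B : Subgroup G) (hB1 : commutator G ⊔ B = ⊤)
    (hB2 : commutator G ⊓ B = ⊥) :
    ∃ σ : Abelianization G →* G, ∀ a, Abelianization.of (σ a) = a := by
  classical
  let f : B →* Abelianization G := (Abelianization.of).comp B.subtype
  have hinj : Function.Injective f := by
    rw [injective_iff_map_eq_one]
    intro x hx
    have hx' : (x : G) ∈ commutator G := (QuotientGroup.eq_one_iff _).mp hx
    have hmem : (x : G) ∈ commutator G ⊓ B := ⟨hx', x.2⟩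
    rw [hB2] at hmem
    exact Subtype.ext (by simpa using hmem)
  have hsurj : Function.Surjective f := by
    intro a
    obtain ⟨g, rfl⟩ : ∃ g, Abelianization.of g = a :=
      QuotientGroup.induction_on a fun g => ⟨g, rfl⟩
    have hg : g ∈ commutator G ⊔ B := by rw [hB1]; trivial
    have hg' : g ∈ ((commutator G : Set G) * (B : Set G)) := by
      rw [← Subgroup.normal_mul]; exact hg
    obtain ⟨c, hc, b, hb, rfl⟩ := hg'
    refine ⟨⟨b, hb⟩, ?_⟩
    show Abelianization.of b = Abelianization.of (c * b)
    rw [map_mul, show Abelianization.of c = 1 from (QuotientGroup.eq_one_iff c).mpr hc,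
      one_mul]
  let e : B ≃* Abelianization G := MulEquiv.ofBijective f ⟨hinj, hsurj⟩
  refine ⟨B.subtype.comp e.symm.toMonoidHom, fun a => ?_⟩
  show Abelianization.of ((e.symm a : B) : G) = a
  exact e.apply_symm_apply a

lemma exists_retraction (G : Type*) [Group G] [Group.FG (Abelianization G)]
    (B : Subgroup G) (hB1 : commutator G ⊔ B = ⊤) (hB2 : commutator G ⊓ B = ⊥) :
    ∃ α : TS G →* ↥(nabla G), ∀ y : ↥(nabla G), α (y : TS G) = y := by
  classical
  obtain ⟨σ, hσ⟩ := exists_section B hB1 hB2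
  obtain ⟨N, pr, gen, pr_mul, pr_prod, pr_cyc⟩ := exists_projections (Abelianization G)
  set π : G →* Abelianization G := Abelianization.of with hπ
  have hσcomm : ∀ x y : Abelianization G, σ x * σ y = σ y * σ x := fun x y => by
    rw [← map_mul, ← map_mul, mul_comm]
  have pr_one : ∀ k, pr k 1 = 1 := by
    intro k
    have h := pr_mul k 1 1
    rw [one_mul] at h
    exact (left_eq_mul.mp h)
  have Qmem : ∀ x y : Abelianization G, tmul (σ x) (σ y) ∈ Subgroup.center (TS G) :=
    fun x y => Subgroup.mem_center_iff.mpr fun s => (tmul_commute_comm (hσcomm x y) s).symm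
  let Qc : Abelianization G → Abelianization G → ↥(Subgroup.center (TS G)) :=
    fun x y => ⟨tmul (σ x) (σ y), Qmem x y⟩
  have Qc_mul_left : ∀ x x' y, Qc (x * x') y = Qc x y * Qc x' y := by
    intro x x' y
    apply Subtype.ext
    show tmul (σ (x * x')) (σ y) = tmul (σ x) (σ y) * tmul (σ x') (σ y)
    rw [map_mul, tmul_mul_left (σ x) (σ x') (σ y), act_tmul,
      show σ x * σ x' * (σ x)⁻¹ = σ x' from by rw [hσcomm x x']; group,
      show σ x * σ y * (σ x)⁻¹ = σ y from by rw [hσcomm x y]; group]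
    exact tmul_commute_comm (hσcomm x' y) (tmul (σ x) (σ y))
  have Qc_mul_right : ∀ x y y', Qc x (y * y') = Qc x y * Qc x y' := by
    intro x y y'
    apply Subtype.ext
    show tmul (σ x) (σ (y * y')) = tmul (σ x) (σ y) * tmul (σ x) (σ y')
    rw [map_mul, tmul_mul_right (σ x) (σ y) (σ y'), act_tmul,
      show σ y * σ x * (σ y)⁻¹ = σ x from by rw [hσcomm y x]; group,
      show σ y * σ y' * (σ y)⁻¹ = σ y' from by rw [hσcomm y y']; group]
  have Qc_one_left : ∀ y, Qc 1 y = 1 := fun y =>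
    Subtype.ext (by show tmul (σ 1) (σ y) = 1; rw [map_one, tmul_one_left'])
  have Qc_one_right : ∀ x, Qc x 1 = 1 := fun x =>
    Subtype.ext (by show tmul (σ x) (σ 1) = 1; rw [map_one, tmul_one_right'])
  let QL : Abelianization G → (Abelianization G →* ↥(Subgroup.center (TS G))) :=
    fun y => MonoidHom.mk' (fun x => Qc x y) (fun a b => Qc_mul_left a b y)
  let QR : Abelianization G → (Abelianization G →* ↥(Subgroup.center (TS G))) :=
    fun x => MonoidHom.mk' (fun y => Qc x y) (fun a b => Qc_mul_right x a b)
  let F : Abelianization G → Abelianization G → ↥(Subgroup.center (TS G)) :=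
    fun x y => (∏ k, Qc (pr k x) (pr k y)) *
      ∏ k, ∏ l, if k < l then Qc (pr k x) (pr l y) * Qc (pr l y) (pr k x) else 1
  have hite : ∀ (c : Prop) (inst : Decidable c) (a b a' b' : ↥(Subgroup.center (TS G))),
      (if c then (a * a') * (b * b') else 1)
        = (if c then a * b else 1) * (if c then a' * b' else 1) := by
    intro c inst a b a' b'
    split_ifs with h
    · exact mul_mul_mul_comm a a' b b'
    · simp
  have F_mul_left : ∀ x x' y, F (x * x') y = F x y * F x' y := by
    intro x x' y
    show (∏ k, Qc (pr k (x * x')) (pr k y)) *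
        (∏ k, ∏ l, if k < l then
          Qc (pr k (x * x')) (pr l y) * Qc (pr l y) (pr k (x * x')) else 1)
      = ((∏ k, Qc (pr k x) (pr k y)) *
          ∏ k, ∏ l, if k < l then Qc (pr k x) (pr l y) * Qc (pr l y) (pr k x) else 1) *
        ((∏ k, Qc (pr k x') (pr k y)) *
          ∏ k, ∏ l, if k < l then Qc (pr k x') (pr l y) * Qc (pr l y) (pr k x') else 1)
    simp only [pr_mul, Qc_mul_left, Qc_mul_right, hite, Finset.prod_mul_distrib]
    exact mul_mul_mul_comm _ _ _ _
  have F_mul_right : ∀ x y y', F x (y * y') = F x y * F x y' := by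
    intro x y y'
    show (∏ k, Qc (pr k x) (pr k (y * y'))) *
        (∏ k, ∏ l, if k < l then
          Qc (pr k x) (pr l (y * y')) * Qc (pr l (y * y')) (pr k x) else 1)
      = ((∏ k, Qc (pr k x) (pr k y)) *
          ∏ k, ∏ l, if k < l then Qc (pr k x) (pr l y) * Qc (pr l y) (pr k x) else 1) *
        ((∏ k, Qc (pr k x) (pr k y')) *
          ∏ k, ∏ l, if k < l then Qc (pr k x) (pr l y') * Qc (pr l y') (pr k x) else 1)
    simp only [pr_mul, Qc_mul_left, Qc_mul_right, hite, Finset.prod_mul_distrib]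
    exact mul_mul_mul_comm _ _ _ _
  have F_diag : ∀ x, F x x = Qc x x := by
    intro x
    have Hdouble : (∏ k, ∏ l, Qc (pr k x) (pr l x)) = Qc x x := by
      have h1 : ∀ k, (∏ l, Qc (pr k x) (pr l x)) = Qc (pr k x) x := by
        intro k
        calc (∏ l, Qc (pr k x) (pr l x)) = ∏ l, (QR (pr k x)) (pr l x) := rfl
          _ = (QR (pr k x)) (∏ l, pr l x) :=
              (map_prod (QR (pr k x)) (fun l => pr l x) Finset.univ).symm
          _ = Qc (pr k x) x := by rw [pr_prod x]; rfl
      calc (∏ k, ∏ l, Qc (pr k x) (pr l x)) = ∏ k, Qc (pr k x) x :=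
            Finset.prod_congr rfl fun k _ => h1 k
        _ = ∏ k, (QL x) (pr k x) := rfl
        _ = (QL x) (∏ k, pr k x) := (map_prod (QL x) (fun k => pr k x) Finset.univ).symm
        _ = Qc x x := by rw [pr_prod x]; rfl
    have Hsplit : ∀ k l, Qc (pr k x) (pr l x)
        = (if k = l then Qc (pr k x) (pr l x) else 1) *
          ((if k < l then Qc (pr k x) (pr l x) else 1) *
            (if l < k then Qc (pr k x) (pr l x) else 1)) := by
      intro k l
      rcases lt_trichotomy k l with h | h | h
      · rw [if_neg (ne_of_lt h), if_pos h, if_neg (asymm h)]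
        simp
      · rw [if_pos h, if_neg (by rw [h]; exact lt_irrefl l),
          if_neg (by rw [h]; exact lt_irrefl l)]
        simp
      · rw [if_neg (ne_of_gt h), if_neg (asymm h), if_pos h]
        simp
    have expand : (∏ k, ∏ l, Qc (pr k x) (pr l x))
        = (∏ k, ∏ l, if k = l then Qc (pr k x) (pr l x) else 1) *
          ((∏ k, ∏ l, if k < l then Qc (pr k x) (pr l x) else 1) *
            (∏ k, ∏ l, if l < k then Qc (pr k x) (pr l x) else 1)) := by
      calc (∏ k, ∏ l, Qc (pr k x) (pr l x))
          = ∏ k, ∏ l, ((if k = l then Qc (pr k x) (pr l x) else 1) *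
              ((if k < l then Qc (pr k x) (pr l x) else 1) *
                (if l < k then Qc (pr k x) (pr l x) else 1))) :=
            Finset.prod_congr rfl fun k _ => Finset.prod_congr rfl fun l _ => Hsplit k l
        _ = _ := by simp only [Finset.prod_mul_distrib]
    have diageq : (∏ k, ∏ l, if k = l then Qc (pr k x) (pr l x) else 1)
        = ∏ k, Qc (pr k x) (pr k x) := by
      refine Finset.prod_congr rfl fun k _ => ?_
      simp [Finset.prod_ite_eq]
    have gteq : (∏ k, ∏ l, if l < k then Qc (pr k x) (pr l x) else 1)
        = ∏ k, ∏ l, if k < l then Qc (pr l x) (pr k x) else 1 := Finset.prod_comm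
    have crossmerge : (∏ k, ∏ l, if k < l then Qc (pr k x) (pr l x) else 1) *
        (∏ k, ∏ l, if k < l then Qc (pr l x) (pr k x) else 1)
        = ∏ k, ∏ l, if k < l then Qc (pr k x) (pr l x) * Qc (pr l x) (pr k x) else 1 := by
      rw [← Finset.prod_mul_distrib]
      refine Finset.prod_congr rfl fun k _ => ?_
      rw [← Finset.prod_mul_distrib]
      refine Finset.prod_congr rfl fun l _ => ?_
      split_ifs <;> simp
    show (∏ k, Qc (pr k x) (pr k x)) *
        (∏ k, ∏ l, if k < l then Qc (pr k x) (pr l x) * Qc (pr l x) (pr k x) else 1)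
      = Qc x x
    rw [← Hdouble, expand, diageq, gteq, crossmerge]
  -- the value of F lies in nabla
  have Fmem : ∀ x y, ((F x y : ↥(Subgroup.center (TS G))) : TS G) ∈ nabla G := by
    intro x y
    suffices h : F x y ∈ Subgroup.comap (Subgroup.center (TS G)).subtype (nabla G) from
      Subgroup.mem_comap.mp h
    show ((∏ k, Qc (pr k x) (pr k y)) *
        ∏ k, ∏ l, if k < l then Qc (pr k x) (pr l y) * Qc (pr l y) (pr k x) else 1)
      ∈ Subgroup.comap (Subgroup.center (TS G)).subtype (nabla G)
    refine mul_mem ?_ ?_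
    · refine Subgroup.prod_mem _ fun k _ => ?_
      rw [Subgroup.mem_comap]
      obtain ⟨m, hm⟩ := pr_cyc k x
      obtain ⟨m', hm'⟩ := pr_cyc k y
      show tmul (σ (pr k x)) (σ (pr k y)) ∈ nabla G
      rw [hm, hm', map_zpow, map_zpow]
      exact tmul_zpow_mem_nabla (σ (gen k)) m m'
    · refine Subgroup.prod_mem _ fun k _ => ?_
      refine Subgroup.prod_mem _ fun l _ => ?_
      by_cases h : k < l
      · rw [if_pos h, Subgroup.mem_comap]
        show tmul (σ (pr k x)) (σ (pr l y)) * tmul (σ (pr l y)) (σ (pr k x)) ∈ nabla G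
        exact tmul_pair_mem_nabla (hσcomm (pr k x) (pr l y))
      · rw [if_neg h]
        exact one_mem _
  -- abelianized conjugation
  have habel : ∀ g g' : G, π (g * g' * g⁻¹) = π g' := by
    intro g g'
    rw [map_mul, map_mul, map_inv, mul_comm (π g) (π g'), mul_inv_cancel_right]
  -- the retraction on TS G
  have hrel : ∀ r ∈ rels G,
      FreeGroup.lift (fun q : G × G => ((F (π q.1) (π q.2) : ↥(Subgroup.center (TS G))) : TS G)) r = 1 := by
    rintro r (⟨g, g', h, rfl⟩ | ⟨g, h, h', rfl⟩) <;>
      simp only [map_mul, map_inv, FreeGroup.lift_apply_of, mul_inv_eq_one] <;> rw [eq_comm]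
    · show ((F (π (g * g' * g⁻¹)) (π (g * h * g⁻¹)) : ↥(Subgroup.center (TS G))) : TS G) *
        ((F (π g) (π h) : ↥(Subgroup.center (TS G))) : TS G)
        = ((F (π (g * g')) (π h) : ↥(Subgroup.center (TS G))) : TS G)
      rw [habel g g', habel g h, ← Subgroup.coe_mul]
      refine congrArg _ ?_
      rw [map_mul, F_mul_left]
      exact (mul_comm _ _)
    · show ((F (π g) (π h) : ↥(Subgroup.center (TS G))) : TS G) *
        ((F (π (h * g * h⁻¹)) (π (h * h' * h⁻¹)) : ↥(Subgroup.center (TS G))) : TS G)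
        = ((F (π g) (π (h * h')) : ↥(Subgroup.center (TS G))) : TS G)
      rw [habel h g, habel h h', ← Subgroup.coe_mul]
      refine congrArg _ ?_
      rw [map_mul, F_mul_right]
  let αTS : TS G →* TS G := PresentedGroup.toGroup hrel
  have hαval : ∀ g h : G, αTS (tmul g h)
      = ((F (π g) (π h) : ↥(Subgroup.center (TS G))) : TS G) := fun g h =>
    PresentedGroup.toGroup.of hrel
  have hαmem : ∀ t, αTS t ∈ nabla G := by
    intro t
    have htop : t ∈ Subgroup.closure (Set.range fun p : G × G => tmul p.1 p.2) := by
      rw [closure_range_tmul]; trivial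
    induction htop using Subgroup.closure_induction with
    | mem s hs =>
        obtain ⟨⟨a, b⟩, rfl⟩ := hs
        rw [show (fun p : G × G => tmul p.1 p.2) (a, b) = tmul a b from rfl, hαval a b]
        exact Fmem (π a) (π b)
    | one => rw [map_one]; exact (nabla G).one_mem
    | mul u v hu hv ihu ihv => rw [map_mul]; exact mul_mem ihu ihv
    | inv u hu ihu => rw [map_inv]; exact inv_mem ihu
  have hret : ∀ t, t ∈ nabla G → αTS t = t := by
    intro t ht
    rw [nabla_eq_closure'] at ht
    induction ht using Subgroup.closure_induction with
    | mem s hs =>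
        obtain ⟨x, rfl⟩ := hs
        rw [hαval x x]
        have hFd : ((F (π x) (π x) : ↥(Subgroup.center (TS G))) : TS G)
            = tmul (σ (π x)) (σ (π x)) := by
          rw [F_diag (π x)]
        rw [hFd]
        have hc : x * (σ (π x))⁻¹ ∈ commutator G := by
          refine (QuotientGroup.eq_one_iff _).mp ?_
          show π (x * (σ (π x))⁻¹) = 1
          rw [map_mul, map_inv, hσ (π x), mul_inv_cancel]
        have hd := diag_eq_of_mem_commutator hc (σ (π x))
        rw [show x * (σ (π x))⁻¹ * σ (π x) = x by group] at hd
        exact hd.symm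
    | one => rw [map_one]
    | mul u v hu hv ihu ihv => rw [map_mul, ihu, ihv]
    | inv u hu ihu => rw [map_inv, ihu]
  refine ⟨αTS.codRestrict (nabla G) hαmem, fun y => Subtype.ext ?_⟩
  show αTS (y : TS G) = (y : TS G)
  exact hret _ y.2

end Dev5
end NATensor

open NATensor in
/-- if `G_ab` is finitely generated and the derived subgroup `[G,G]` has a
complement in `G`, then `1 → ∇(G) → G ⊗ G → G ∧ G → 1` splits on the left; consequently
`G ⊗ G ≅ ∇(G) × (G ∧ G)` and `J(G) ≅ M(G) × ∇(G)`, i.e.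
`π₃(SK(G,1)) ≅ H₂(G) × ∇(G)`. -/
theorem tensor_square_splits_of_complemented_commutator (G : Type*) [Group G]
    [Group.FG (Abelianization G)]
    (B : Subgroup G) (hB1 : commutator G ⊔ B = ⊤) (hB2 : commutator G ⊓ B = ⊥) :
    (∃ α : TS G →* ↥(nabla G), ∀ y : ↥(nabla G), α (y : TS G) = y) ∧
    Nonempty (TS G ≃* ↥(nabla G) × ES G) ∧
    Nonempty (↥(J G) ≃* ↥(M G) × ↥(nabla G)) := by
  obtain ⟨α, hα⟩ := exists_retraction G B hB1 hB2
  have hmknab : ∀ x : TS G, x ∈ nabla G → QuotientGroup.mk' (nabla G) x = 1 := fun x hx =>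
    (QuotientGroup.eq_one_iff x).mpr hx
  refine ⟨⟨α, hα⟩, ?_, ?_⟩
  · -- TS G ≃* nabla G × ES G
    let φ : TS G →* ↥(nabla G) × ES G := α.prod (QuotientGroup.mk' (nabla G))
    have hinj : Function.Injective φ := by
      rw [injective_iff_map_eq_one]
      intro x hx
      rw [Prod.ext_iff] at hx
      obtain ⟨h1, h2⟩ := hx
      have hxn : x ∈ nabla G := (QuotientGroup.eq_one_iff x).mp h2
      have h3 := hα ⟨x, hxn⟩
      have h4 : (⟨x, hxn⟩ : ↥(nabla G)) = 1 := by
        rw [← h3]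
        exact h1
      exact congrArg Subtype.val h4
    have hsurj : Function.Surjective φ := by
      rintro ⟨n, q⟩
      obtain ⟨e, rfl⟩ := QuotientGroup.mk'_surjective (nabla G) q
      refine ⟨(n : TS G) * e * ((α e : ↥(nabla G)) : TS G)⁻¹, ?_⟩
      have c1 : α ((n : TS G) * e * ((α e : ↥(nabla G)) : TS G)⁻¹) = n := by
        rw [map_mul, map_mul, map_inv, hα n, hα (α e)]
        group
      have c2 : QuotientGroup.mk' (nabla G) ((n : TS G) * e * ((α e : ↥(nabla G)) : TS G)⁻¹)
          = QuotientGroup.mk' (nabla G) e := by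
        rw [map_mul, map_mul, map_inv, hmknab _ n.2, hmknab _ (α e).2]
        group
      exact Prod.ext c1 c2
    exact ⟨MulEquiv.ofBijective φ ⟨hinj, hsurj⟩⟩
  · -- J G ≃* M G × nabla G
    have hkapmk : ∀ t : TS G, kappa' G (QuotientGroup.mk' (nabla G) t) = kappa G t :=
      fun t => rfl
    have hJmem : ∀ x : ↥(J G), kappa G (x : TS G) = 1 := fun x => x.2
    have hMmem : ∀ x : ↥(J G),
        QuotientGroup.mk' (nabla G) (x : TS G) ∈ M G := fun x => by
      show kappa' G (QuotientGroup.mk' (nabla G) (x : TS G)) = 1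
      rw [hkapmk, hJmem]
    have hnabJ : nabla G ≤ J G := nabla_le_ker_kappa G
    let m1 : ↥(J G) →* ↥(M G) :=
      MonoidHom.codRestrict ((QuotientGroup.mk' (nabla G)).comp (J G).subtype) (M G) hMmem
    let m2 : ↥(J G) →* ↥(nabla G) := α.comp (J G).subtype
    let ψ : ↥(J G) →* ↥(M G) × ↥(nabla G) := m1.prod m2
    have hinj : Function.Injective ψ := by
      rw [injective_iff_map_eq_one]
      intro x hx
      rw [Prod.ext_iff] at hx
      obtain ⟨h1, h2⟩ := hx
      have h1' : QuotientGroup.mk' (nabla G) (x : TS G) = 1 := congrArg Subtype.val h1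
      have hxn : (x : TS G) ∈ nabla G := (QuotientGroup.eq_one_iff _).mp h1'
      have h2' : α (x : TS G) = 1 := h2
      have h3 := hα ⟨(x : TS G), hxn⟩
      have h4 : (⟨(x : TS G), hxn⟩ : ↥(nabla G)) = 1 := by rw [← h3]; exact h2'
      have h5 : (x : TS G) = 1 := congrArg Subtype.val h4
      exact Subtype.ext h5
    have hsurj : Function.Surjective ψ := by
      rintro ⟨m, n⟩
      obtain ⟨t, ht⟩ := QuotientGroup.mk'_surjective (nabla G) (m : ES G)
      have htJ : t ∈ J G := by
        show kappa G t = 1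
        rw [← hkapmk, ht]
        exact m.2
      have hx : (n : TS G) * t * ((α t : ↥(nabla G)) : TS G)⁻¹ ∈ J G :=
        mul_mem (mul_mem (hnabJ n.2) htJ) (inv_mem (hnabJ (α t).2))
      refine ⟨⟨(n : TS G) * t * ((α t : ↥(nabla G)) : TS G)⁻¹, hx⟩, ?_⟩
      have c1 : m1 ⟨(n : TS G) * t * ((α t : ↥(nabla G)) : TS G)⁻¹, hx⟩ = m := by
        apply Subtype.ext
        show QuotientGroup.mk' (nabla G) ((n : TS G) * t * ((α t : ↥(nabla G)) : TS G)⁻¹)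
          = (m : ES G)
        rw [map_mul, map_mul, map_inv, hmknab _ n.2, hmknab _ (α t).2, ht]
        group
      have c2 : m2 ⟨(n : TS G) * t * ((α t : ↥(nabla G)) : TS G)⁻¹, hx⟩ = n := by
        show α ((n : TS G) * t * ((α t : ↥(nabla G)) : TS G)⁻¹) = n
        rw [map_mul, map_mul, map_inv, hα n, hα (α t)]
        group
      exact Prod.ext c1 c2
    exact ⟨MulEquiv.ofBijective ψ ⟨hinj, hsurj⟩⟩
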